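/- Let (a_ij) be a matrix with a_ij ≥ 0 for all i, j that defines a compact operator on ℓ². Then the entrywise square matrix (a_ij²) also defines a compact operator on ℓ². -/

import Mathlib

open Filter Metric Finset
open scoped ENNReal NNReal Topology

noncomputable section
namespace Stmt12

abbrev X := lp (fun _ : ℕ => ℝ) 2

def ev (i : ℕ) : X →L[ℝ] ℝ := innerSL ℝ (lp.single 2 i (1:ℝ))

@[simp] lemma ev_apply (i : ℕ) (f : X) : ev i f = f i := by
  simp [ev, lp.inner_single_left, RCLike.inner_apply]

lemma mem_of_le {f : ℕ → ℝ} (g : X) (h : ∀ i, ‖f i‖ ≤ ‖g i‖) : Memℓp f 2 := by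
  apply memℓp_gen
  have hg : Summable (fun i => ‖g i‖ ^ (2:ℝ≥0∞).toReal) := (lp.memℓp g).summable (by norm_num)
  exact Summable.of_nonneg_of_le (fun i => by positivity)
    (fun i => Real.rpow_le_rpow (norm_nonneg _) (h i) (by norm_num)) hg

lemma norm_le_norm (f g : X) (h : ∀ i, ‖f i‖ ≤ ‖g i‖) : ‖f‖ ≤ ‖g‖ := by
  have hp : 0 < (2:ℝ≥0∞).toReal := by norm_num
  rw [lp.norm_eq_tsum_rpow hp, lp.norm_eq_tsum_rpow hp]
  exact Real.rpow_le_rpow (tsum_nonneg fun i => by positivity)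
    (Summable.tsum_le_tsum (fun i => Real.rpow_le_rpow (norm_nonneg _) (h i) hp.le)
      ((lp.memℓp f).summable hp) ((lp.memℓp g).summable hp)) (by positivity)

def habs (x : X) : X := ⟨fun i => |x i|, mem_of_le x (fun i => by simp)⟩

@[simp] lemma habs_apply (x : X) (i : ℕ) : (habs x) i = |x i| := rfl

lemma norm_habs (x : X) : ‖habs x‖ = ‖x‖ :=
  le_antisymm (norm_le_norm _ _ fun i => by simp) (norm_le_norm _ _ fun i => by simp)

lemma hasSum_matrix (T : X →L[ℝ] X) (x : X) (i : ℕ) :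
    HasSum (fun j => x j * T (lp.single 2 j (1:ℝ)) i) (T x i) := by
  have h1 : HasSum (fun j : ℕ => lp.single 2 j (x j)) x :=
    lp.hasSum_single (by norm_num) x
  have h2 : HasSum (fun j : ℕ => T (lp.single 2 j (x j))) (T x) := h1.mapL T
  have h3 := h2.mapL (ev i)
  simp only [ev_apply] at h3
  have key : ∀ j, T (lp.single 2 j (x j)) i = x j * T (lp.single 2 j (1:ℝ)) i := by
    intro j
    have hs : lp.single 2 j (x j) = (x j • lp.single 2 j (1:ℝ) : X) := by
      rw [← lp.single_smul]
      norm_num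
    rw [hs, map_smul]
    simp [lp.coeFn_smul]
  simpa only [key] using h3

lemma exists_matrix_op (b : ℕ → ℕ → ℝ) (C : X →L[ℝ] X)
    (hd : ∀ i j, |b i j| ≤ C (lp.single 2 j (1:ℝ)) i) :
    ∃ B : X →L[ℝ] X, (∀ i j, B (lp.single 2 j (1:ℝ)) i = b i j) ∧
      ∀ x : X, ‖B x‖ ≤ ‖C‖ * ‖x‖ := by
  set c : ℕ → ℕ → ℝ := fun i j => C (lp.single 2 j (1:ℝ)) i with hc
  have hc0 : ∀ i j, 0 ≤ c i j := fun i j => le_trans (abs_nonneg _) (hd i j)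
  have key : ∀ (x : X) i, HasSum (fun j => |x j| * c i j) (C (habs x) i) := by
    intro x i
    simpa using hasSum_matrix C (habs x) i
  have hsumn : ∀ (x : X) i, Summable (fun j => ‖x j * b i j‖) := by
    intro x i
    refine Summable.of_nonneg_of_le (fun j => norm_nonneg _) (fun j => ?_) (key x i).summable
    rw [Real.norm_eq_abs, abs_mul]
    exact mul_le_mul_of_nonneg_left (hd i j) (abs_nonneg _)
  have hsum : ∀ (x : X) i, Summable (fun j => x j * b i j) := fun x i => (hsumn x i).of_norm
  set F : X → ℕ → ℝ := fun x i => ∑' j, x j * b i j with hF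
  have bound_coord : ∀ (x : X) i, ‖F x i‖ ≤ ‖C (habs x) i‖ := by
    intro x i
    have h1 : ‖F x i‖ ≤ ∑' j, ‖x j * b i j‖ := norm_tsum_le_tsum_norm (hsumn x i)
    have h2 : ∑' j, ‖x j * b i j‖ ≤ ∑' j, |x j| * c i j := by
      refine Summable.tsum_le_tsum (fun j => ?_) (hsumn x i) (key x i).summable
      rw [Real.norm_eq_abs, abs_mul]
      exact mul_le_mul_of_nonneg_left (hd i j) (abs_nonneg _)
    have h3 : ∑' j, |x j| * c i j = C (habs x) i := (key x i).tsum_eq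
    calc ‖F x i‖ ≤ C (habs x) i := by rw [← h3]; exact h1.trans h2
      _ ≤ ‖C (habs x) i‖ := le_abs_self _
  have memF : ∀ x : X, Memℓp (F x) 2 := fun x => mem_of_le (C (habs x)) (bound_coord x)
  set Blin : X →ₗ[ℝ] X :=
    { toFun := fun x => ⟨F x, memF x⟩
      map_add' := by
        intro x y
        apply Subtype.ext
        funext i
        have : ∀ j, ((x + y : X) j) * b i j = x j * b i j + y j * b i j := by
          intro j
          rw [lp.coeFn_add, Pi.add_apply, add_mul]
        show F (x + y) i = F x i + F y i
        simp only [hF, this]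
        exact Summable.tsum_add (hsum x i) (hsum y i)
      map_smul' := by
        intro r x
        apply Subtype.ext
        funext i
        show F (r • x) i = r * F x i
        have : ∀ j, ((r • x : X) j) * b i j = r * (x j * b i j) := by
          intro j
          rw [lp.coeFn_smul, Pi.smul_apply, smul_eq_mul, mul_assoc]
        simp only [hF, this]
        exact tsum_mul_left } with hBlin
  have hBnorm : ∀ x : X, ‖Blin x‖ ≤ ‖C‖ * ‖x‖ := by
    intro x
    calc ‖Blin x‖ ≤ ‖C (habs x)‖ := norm_le_norm _ _ (bound_coord x)
      _ ≤ ‖C‖ * ‖habs x‖ := C.le_opNorm _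
      _ = ‖C‖ * ‖x‖ := by rw [norm_habs]
  refine ⟨Blin.mkContinuous ‖C‖ hBnorm, ?_, ?_⟩
  · intro i j
    show F (lp.single 2 j (1:ℝ)) i = b i j
    simp only [hF]
    rw [tsum_eq_single j]
    · rw [lp.single_apply_self, one_mul]
    · intro j' hj'
      rw [lp.single_apply_ne 2 j _ hj', zero_mul]
  · intro x
    exact hBnorm x

lemma single_one_apply (k i : ℕ) : (lp.single 2 k (1:ℝ) : X) i = if i = k then 1 else 0 := by
  rcases eq_or_ne i k with rfl | h
  · simp [lp.single_apply_self]
  · simp [lp.single_apply_ne 2 k _ h, h]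

def P (n : ℕ) : X →L[ℝ] X :=
  ∑ k ∈ Finset.range n, (ev k).smulRight (lp.single 2 k (1:ℝ) : X)

lemma P_apply (n : ℕ) (x : X) (i : ℕ) : P n x i = if i < n then x i else 0 := by
  have h0 : P n x i = ev i (P n x) := (ev_apply i _).symm
  rw [h0, P]
  rw [ContinuousLinearMap.sum_apply, map_sum]
  have : ∀ k, ev i ((ev k).smulRight (lp.single 2 k (1:ℝ) : X) x)
      = x k * (if i = k then 1 else 0) := by
    intro k
    rw [ContinuousLinearMap.smulRight_apply, map_smul, smul_eq_mul, ev_apply, ev_apply,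
      single_one_apply]
  simp only [this, mul_ite, mul_one, mul_zero]
  rw [Finset.sum_ite_eq (Finset.range n) i (fun k => x k)]
  simp [Finset.mem_range]

lemma isCompact_P (n : ℕ) : IsCompactOperator (P n) := by
  have h1 : ∀ k : ℕ, IsCompactOperator ((ev k).smulRight (lp.single 2 k (1:ℝ) : X)) := by
    intro k
    have hg : IsCompactOperator (ContinuousLinearMap.toSpanSingleton ℝ (lp.single 2 k (1:ℝ) : X)) := by
      refine ⟨(ContinuousLinearMap.toSpanSingleton ℝ (lp.single 2 k (1:ℝ) : X)) '' closedBall 0 1,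
        (isCompact_closedBall (0:ℝ) 1).image (ContinuousLinearMap.continuous _), ?_⟩
      exact Filter.mem_of_superset (closedBall_mem_nhds 0 one_pos)
        (Set.subset_preimage_image _ _)
    have h2 := hg.comp_clm (ev k)
    have h3 : ⇑((ev k).smulRight (lp.single 2 k (1:ℝ) : X))
        = ⇑(ContinuousLinearMap.toSpanSingleton ℝ (lp.single 2 k (1:ℝ) : X)) ∘ ⇑(ev k) := by
      funext x
      simp [ContinuousLinearMap.toSpanSingleton_apply]
    rw [h3]
    exact h2
  rw [P]
  classical
  induction (Finset.range n) using Finset.induction with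
  | empty => simpa using (isCompactOperator_zero : IsCompactOperator (0 : X → X))
  | @insert k s hks ih =>
    rw [Finset.sum_insert hks]
    exact (h1 k).add ih

def Q (n : ℕ) : X →L[ℝ] X := ContinuousLinearMap.id ℝ X - P n

lemma Q_apply (n : ℕ) (x : X) (i : ℕ) : Q n x i = if i < n then 0 else x i := by
  have : Q n x = x - P n x := rfl
  rw [this, lp.coeFn_sub, Pi.sub_apply, P_apply]
  split <;> simp

lemma Q_norm_le (n : ℕ) (x : X) : ‖Q n x‖ ≤ ‖x‖ := by
  refine norm_le_norm _ _ fun i => ?_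
  rw [Q_apply]
  split <;> simp

lemma Q_tendsto (x : X) : Tendsto (fun n => Q n x) atTop (𝓝 0) := by
  rw [tendsto_zero_iff_norm_tendsto_zero]
  have hp : 0 < (2:ℝ≥0∞).toReal := by norm_num
  set h : ℕ → ℝ := fun i => ‖x i‖ ^ (2:ℝ≥0∞).toReal with hh
  have hsum : Summable h := (lp.memℓp x).summable hp
  have hnorm : ∀ n, ‖Q n x‖ ^ (2:ℝ≥0∞).toReal = (∑' i, h i) - ∑ i ∈ Finset.range n, h i := by
    intro n
    rw [lp.norm_rpow_eq_tsum hp]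
    have e1 : ∀ i, ‖Q n x i‖ ^ (2:ℝ≥0∞).toReal
        = h i - (if i < n then h i else 0) := by
      intro i
      rw [Q_apply]
      split_ifs with hi
      · rw [norm_zero, Real.zero_rpow hp.ne', sub_self]
      · rw [sub_zero]
    have e2 : Summable (fun i => if i < n then h i else 0) := by
      apply summable_of_ne_finset_zero (s := Finset.range n)
      intro i hi
      rw [if_neg (by simpa using hi)]
    have e3 : ∑' i, (if i < n then h i else 0) = ∑ i ∈ Finset.range n, h i := by
      rw [tsum_eq_sum (s := Finset.range n)]
      · exact Finset.sum_congr rfl fun i hi => if_pos (Finset.mem_range.1 hi)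
      · intro i hi
        rw [if_neg (by simpa using hi)]
    calc (∑' i, ‖Q n x i‖ ^ (2:ℝ≥0∞).toReal)
        = ∑' i, (h i - (if i < n then h i else 0)) := by
          exact tsum_congr e1
      _ = (∑' i, h i) - ∑' i, (if i < n then h i else 0) := Summable.tsum_sub hsum e2
      _ = (∑' i, h i) - ∑ i ∈ Finset.range n, h i := by rw [e3]
  have hsq : Tendsto (fun n => ‖Q n x‖ ^ (2:ℝ≥0∞).toReal) atTop (𝓝 0) := by
    simp only [hnorm]
    have := hsum.hasSum.tendsto_sum_nat
    simpa using (tendsto_const_nhds (x := ∑' i, h i)).sub this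
  have hQn : ∀ n, ‖Q n x‖ = Real.sqrt (‖Q n x‖ ^ (2:ℝ≥0∞).toReal) := by
    intro n
    rw [show (2:ℝ≥0∞).toReal = ((2:ℕ):ℝ) by norm_num, Real.rpow_natCast]
    exact (Real.sqrt_sq (norm_nonneg _)).symm
  have hfun : (fun n => ‖Q n x‖) = fun n => Real.sqrt (‖Q n x‖ ^ (2:ℝ≥0∞).toReal) :=
    funext hQn
  rw [hfun]
  have hsqrt : Tendsto Real.sqrt (𝓝 0) (𝓝 0) := by
    simpa using Real.continuous_sqrt.tendsto 0
  exact hsqrt.comp hsq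

lemma clm_ext_single (T S : X →L[ℝ] X)
    (h : ∀ j, T (lp.single 2 j (1:ℝ)) = S (lp.single 2 j (1:ℝ))) : T = S := by
  apply ContinuousLinearMap.ext
  intro x
  have h1 : HasSum (fun j : ℕ => lp.single 2 j (x j)) x := lp.hasSum_single (by norm_num) x
  have h2 := h1.mapL T
  have h3 := h1.mapL S
  have key : ∀ j : ℕ, T (lp.single 2 j (x j)) = S (lp.single 2 j (x j)) := by
    intro j
    have hs : lp.single 2 j (x j) = (x j • lp.single 2 j (1:ℝ) : X) := by
      rw [← lp.single_smul]; norm_num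
    rw [hs, map_smul, map_smul, h j]
  rw [funext key] at h2
  exact h2.unique h3

lemma comp_tendsto (A : X →L[ℝ] X) (hc : IsCompactOperator A)
    (Q : ℕ → X →L[ℝ] X) (hQ1 : ∀ n (x : X), ‖Q n x‖ ≤ ‖x‖)
    (hQ2 : ∀ x : X, Tendsto (fun n => Q n x) atTop (𝓝 0)) :
    Tendsto (fun n => ‖Q n ∘L A‖) atTop (𝓝 0) := by
  obtain ⟨K, hK, hKsub⟩ :=
    (hc : IsCompactOperator (A : X →ₗ[ℝ] X)).image_closedBall_subset_compact 1
  rw [Metric.tendsto_atTop]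
  intro ε hε
  -- finite (ε/4)-net of K
  obtain ⟨s, hsfin, hsK⟩ := (Metric.totallyBounded_iff.1 hK.totallyBounded) (ε/4) (by linarith)
  have hev : ∀ᶠ n in atTop, ∀ y ∈ s, ‖Q n y‖ < ε/4 := by
    rw [Filter.eventually_all_finite hsfin]
    intro y _
    have := (hQ2 y).norm
    rw [norm_zero] at this
    exact this.eventually_lt_const (by linarith)
  obtain ⟨N, hN⟩ := (Filter.eventually_atTop).1 hev
  refine ⟨N, fun n hn => ?_⟩
  have hKbound : ∀ z ∈ K, ‖Q n z‖ ≤ ε/2 := by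
    intro z hz
    obtain ⟨y, hy, hzy⟩ := Set.mem_iUnion₂.1 (hsK hz)
    have h1 : ‖Q n (z - y)‖ ≤ ‖z - y‖ := hQ1 n _
    have h2 : ‖z - y‖ < ε/4 := by rwa [← dist_eq_norm]
    have h3 : ‖Q n y‖ < ε/4 := hN n hn y hy
    calc ‖Q n z‖ = ‖Q n (z - y) + Q n y‖ := by rw [← map_add, sub_add_cancel]
      _ ≤ ‖Q n (z - y)‖ + ‖Q n y‖ := norm_add_le _ _
      _ ≤ ε/4 + ε/4 := add_le_add (by linarith) h3.le
      _ = ε/2 := by ring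
  have hop : ‖Q n ∘L A‖ ≤ ε/2 := by
    refine ContinuousLinearMap.opNorm_le_bound _ (by linarith) fun x => ?_
    rcases eq_or_ne x 0 with rfl | hx
    · simp
    · have hxn : (0:ℝ) < ‖x‖ := norm_pos_iff.2 hx
      set y : X := ‖x‖⁻¹ • x with hy
      have hyb : y ∈ closedBall (0:X) 1 := by
        rw [mem_closedBall, dist_zero_right, hy, norm_smul, norm_inv, norm_norm,
          inv_mul_cancel₀ hxn.ne']
      have hAy : A y ∈ K := hKsub ⟨y, hyb, rfl⟩
      have h4 : ‖Q n (A y)‖ ≤ ε/2 := hKbound _ hAy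
      have h5 : (Q n ∘L A) x = ‖x‖ • Q n (A y) := by
        rw [hy, map_smul, map_smul, ← smul_assoc, smul_eq_mul, mul_inv_cancel₀ hxn.ne',
          one_smul]
        rfl
      rw [h5, norm_smul, norm_norm, mul_comm]
      exact mul_le_mul_of_nonneg_right h4 (norm_nonneg _)
  rw [Real.dist_eq, sub_zero, abs_of_nonneg (norm_nonneg _)]
  linarith

end Stmt12
end

set_option maxHeartbeats 1000000 in
set_option synthInstance.maxHeartbeats 400000 in
/-- if a matrix `(a_ij)` with nonnegative entries defines a compact
operator on `ℓ²`, then the entrywise square matrix `(a_ij²)` also defines a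
compact operator on `ℓ²`. -/
theorem stmt12 (a : ℕ → ℕ → ℝ) (h0 : ∀ i j, 0 ≤ a i j)
    (A : lp (fun _ : ℕ => ℝ) 2 →L[ℝ] lp (fun _ : ℕ => ℝ) 2)
    (hA : ∀ i j : ℕ, A (lp.single 2 j (1 : ℝ)) i = a i j)
    (hc : IsCompactOperator A) :
    ∃ A2 : lp (fun _ : ℕ => ℝ) 2 →L[ℝ] lp (fun _ : ℕ => ℝ) 2,
      (∀ i j : ℕ, A2 (lp.single 2 j (1 : ℝ)) i = a i j ^ 2) ∧
      IsCompactOperator A2 := by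
  classical
  open Stmt12 in
  have hnorm_single : ∀ j : ℕ, ‖(lp.single 2 j (1:ℝ) : Stmt12.X)‖ = 1 := by
    intro j
    have := lp.norm_single (p := 2) (E := fun _ : ℕ => ℝ) (by norm_num)
      j (1:ℝ)
    simpa using this
  have ha_le : ∀ i j, a i j ≤ ‖A‖ := by
    intro i j
    have h1 : ‖A (lp.single 2 j (1:ℝ)) i‖ ≤ ‖A (lp.single 2 j (1:ℝ))‖ :=
      lp.norm_apply_le_norm (by norm_num) _ i
    rw [hA, Real.norm_eq_abs, abs_of_nonneg (h0 i j)] at h1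
    calc a i j ≤ ‖A (lp.single 2 j (1:ℝ))‖ := h1
      _ ≤ ‖A‖ * ‖(lp.single 2 j (1:ℝ) : Stmt12.X)‖ := A.le_opNorm _
      _ = ‖A‖ := by rw [hnorm_single, mul_one]
  -- the squared operator
  have hdB : ∀ i j, |a i j ^ 2| ≤ (‖A‖ • A) (lp.single 2 j (1:ℝ)) i := by
    intro i j
    have he : (‖A‖ • A) (lp.single 2 j (1:ℝ)) i = ‖A‖ * a i j := by
      rw [ContinuousLinearMap.smul_apply, lp.coeFn_smul, Pi.smul_apply, smul_eq_mul, hA]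
    rw [he, abs_of_nonneg (by positivity), sq]
    exact mul_le_mul_of_nonneg_right (ha_le i j) (h0 i j)
  obtain ⟨B, hB, -⟩ := Stmt12.exists_matrix_op (fun i j => a i j ^ 2) (‖A‖ • A) hdB
  -- remainder operators
  have hdR : ∀ n i j, |if i < n then (0:ℝ) else a i j ^ 2|
      ≤ (‖A‖ • (Stmt12.Q n ∘L A)) (lp.single 2 j (1:ℝ)) i := by
    intro n i j
    have he : (‖A‖ • (Stmt12.Q n ∘L A)) (lp.single 2 j (1:ℝ)) i
        = ‖A‖ * (if i < n then 0 else a i j) := by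
      rw [ContinuousLinearMap.smul_apply, lp.coeFn_smul, Pi.smul_apply, smul_eq_mul,
        ContinuousLinearMap.comp_apply, Stmt12.Q_apply, hA]
    rw [he]
    split_ifs with hi
    · rw [abs_zero, mul_zero]
    · rw [abs_of_nonneg (by positivity), sq]
      exact mul_le_mul_of_nonneg_right (ha_le i j) (h0 i j)
  have hRex : ∀ n : ℕ, ∃ R : Stmt12.X →L[ℝ] Stmt12.X,
      (∀ i j, R (lp.single 2 j (1:ℝ)) i = if i < n then (0:ℝ) else a i j ^ 2) ∧
      ∀ x : Stmt12.X, ‖R x‖ ≤ ‖‖A‖ • (Stmt12.Q n ∘L A)‖ * ‖x‖ :=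
    fun n => Stmt12.exists_matrix_op _ _ (hdR n)
  choose R hR1 hR2 using hRex
  have heq : ∀ n, B - Stmt12.P n ∘L B = R n := by
    intro n
    apply Stmt12.clm_ext_single
    intro j
    apply Subtype.ext
    funext i
    rw [ContinuousLinearMap.sub_apply]
    rw [lp.coeFn_sub, Pi.sub_apply, ContinuousLinearMap.comp_apply, Stmt12.P_apply, hB, hR1]
    split_ifs with hi
    · exact sub_self _
    · rw [sub_zero]
  have hnormdiff : ∀ n, ‖B - Stmt12.P n ∘L B‖ ≤ ‖A‖ * ‖Stmt12.Q n ∘L A‖ := by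
    intro n
    rw [heq n]
    have h1 : ‖R n‖ ≤ ‖‖A‖ • (Stmt12.Q n ∘L A)‖ :=
      ContinuousLinearMap.opNorm_le_bound _ (norm_nonneg _) (hR2 n)
    have h2 : ‖‖A‖ • (Stmt12.Q n ∘L A)‖ ≤ ‖A‖ * ‖Stmt12.Q n ∘L A‖ := by
      refine (ContinuousLinearMap.opNorm_smul_le _ _).trans ?_
      rw [Real.norm_eq_abs, abs_of_nonneg (norm_nonneg A)]
    exact h1.trans h2
  have htail := Stmt12.comp_tendsto A hc Stmt12.Q Stmt12.Q_norm_le Stmt12.Q_tendsto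
  have hto0 : Tendsto (fun n => ‖B - Stmt12.P n ∘L B‖) atTop (𝓝 0) := by
    refine squeeze_zero (fun n => norm_nonneg _) hnormdiff ?_
    simpa only [mul_zero] using htail.const_mul ‖A‖
  have hlim : Tendsto (fun n => Stmt12.P n ∘L B) atTop (𝓝 B) := by
    rw [tendsto_iff_dist_tendsto_zero]
    have hfn : (fun n => dist (Stmt12.P n ∘L B) B) = fun n => ‖B - Stmt12.P n ∘L B‖ :=
      funext fun n => by rw [dist_eq_norm, norm_sub_rev]
    rw [hfn]
    exact hto0
  have hcompacts : ∀ n, IsCompactOperator (Stmt12.P n ∘L B) :=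
    fun n => (Stmt12.isCompact_P n).comp_clm B
  exact ⟨B, hB, isCompactOperator_of_tendsto hlim (Filter.Eventually.of_forall hcompacts)⟩
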